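/- Let $u_0\in C^1(\mathbb{R}^n)$ be Lipschitz continuous and suppose there exist $K>0$ and $\delta\in(0,1)$ such that $|u_0(x)-Du_0(x)\cdot x|\le K(1+|x|)^{1-\delta}$ for all $x\in\mathbb{R}^n$. Then: (i) for all $0<r_1<r_2\le1$ and all $x\in\mathbb{R}^n$, $\big|r_2\,u_0(x/r_2)-r_1\,u_0(x/r_1)\big|\le\tfrac{K}{\delta}(1+|x|)^{1-\delta}(r_2^{\delta}-r_1^{\delta})$; (ii) the limit $\bar u_0(x):=\lim_{r\to0^+}r\,u_0(x/r)$ exists locally uniformly in $x$, is Lipschitz continuous and positively $1$-homogeneous; (iii) $|u_0(x)-\bar u_0(x)|\le\tfrac{K}{\delta}(1+|x|)^{1-\delta}$ for all $x\in\mathbb{R}^n$. -/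

import Mathlib

open MeasureTheory Filter Metric Set
open scoped Topology NNReal RealInnerProductSpace

noncomputable section

/-- `ℝⁿ` with the Euclidean norm. -/
abbrev Euc (n : ℕ) : Type := EuclideanSpace ℝ (Fin n)

/-- `G_s(r) = ∫_0^r (1+w²)^{-(n+1+s)/2} dw`. -/
def Gfun (n : ℕ) (s r : ℝ) : ℝ :=
  ∫ w in (0:ℝ)..r, (1 + w ^ 2) ^ (-((n : ℝ) + 1 + s) / 2)

/-- Fractional mean curvature of the subgraph of `u` at the point `(x, u x)`:
`H_s((x,u(x)),E) = -∫ [G_s((u(x+z)-u(x))/|z|) + G_s((u(x-z)-u(x))/|z|)] |z|^{-(n+s)} dz`. -/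
def Hgraph (n : ℕ) (s : ℝ) (u : Euc n → ℝ) (x : Euc n) : ℝ :=
  -∫ z : Euc n,
      (Gfun n s ((u (x + z) - u x) / ‖z‖) + Gfun n s ((u (x - z) - u x) / ‖z‖))
        / ‖z‖ ^ ((n : ℝ) + s)

/-- The (GF) operator `φ_t + √(1+|Dφ|²) · H_s` applied to a function `φ` at `(x, t)`. -/
def gfOp (n : ℕ) (s : ℝ) (φ : Euc n → ℝ → ℝ) (x : Euc n) (t : ℝ) : ℝ :=
  deriv (fun τ => φ x τ) t
    + Real.sqrt (1 + ‖gradient (fun y => φ y t) x‖ ^ 2)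
        * Hgraph n s (fun y => φ y t) x

/-- Viscosity subsolution of (GF) for times in the set `I`. -/
def IsGFSubsolOn (n : ℕ) (s : ℝ) (v : Euc n → ℝ → ℝ) (I : Set ℝ) : Prop :=
  ∀ φ : Euc n → ℝ → ℝ,
    ContDiff ℝ (⊤ : ℕ∞) (fun p : Euc n × ℝ => φ p.1 p.2) →
    ∀ x t, t ∈ I → (∀ y, ∀ r ∈ I, v y r ≤ φ y r) → v x t = φ x t →
      gfOp n s φ x t ≤ 0

/-- Viscosity supersolution of (GF) for times in the set `I`. -/
def IsGFSupersolOn (n : ℕ) (s : ℝ) (v : Euc n → ℝ → ℝ) (I : Set ℝ) : Prop :=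
  ∀ φ : Euc n → ℝ → ℝ,
    ContDiff ℝ (⊤ : ℕ∞) (fun p : Euc n × ℝ => φ p.1 p.2) →
    ∀ x t, t ∈ I → (∀ y, ∀ r ∈ I, φ y r ≤ v y r) → v x t = φ x t →
      0 ≤ gfOp n s φ x t

/-- Viscosity solution of (GF) for times in the set `I`. -/
def IsGFSolOn (n : ℕ) (s : ℝ) (v : Euc n → ℝ → ℝ) (I : Set ℝ) : Prop :=
  IsGFSubsolOn n s v I ∧ IsGFSupersolOn n s v I

/-- Viscosity solution of (GF) on `ℝⁿ × [0,∞)` with initial datum `u₀`. -/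
def IsGFSolution (n : ℕ) (s : ℝ) (u0 : Euc n → ℝ) (u : Euc n → ℝ → ℝ) : Prop :=
  ContinuousOn (fun p : Euc n × ℝ => u p.1 p.2) {p : Euc n × ℝ | 0 ≤ p.2}
    ∧ IsGFSolOn n s u (Set.Ioi 0)
    ∧ ∀ x, u x 0 = u0 x

/-- Positively 1-homogeneous function. -/
def PosHomOne (n : ℕ) (f : Euc n → ℝ) : Prop :=
  ∀ r : ℝ, 0 < r → ∀ x, f (r • x) = r * f x

lemma hasDerivAt_scaled {n : ℕ} (u0 : Euc n → ℝ) (hC1 : ContDiff ℝ 1 u0) (x : Euc n)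
    {r : ℝ} (hr : 0 < r) :
    HasDerivAt (fun t : ℝ => t * u0 (t⁻¹ • x))
      (u0 (r⁻¹ • x) - ⟪gradient u0 (r⁻¹ • x), r⁻¹ • x⟫) r := by
  have hinv : HasDerivAt (fun t : ℝ => t⁻¹) (-(r ^ 2)⁻¹) r := hasDerivAt_inv hr.ne'
  have hsmul : HasDerivAt (fun t : ℝ => t⁻¹ • x) ((-(r ^ 2)⁻¹) • x) r := hinv.smul_const x
  have hd : HasFDerivAt u0 (fderiv ℝ u0 (r⁻¹ • x)) (r⁻¹ • x) :=
    (hC1.differentiable one_ne_zero (r⁻¹ • x)).hasFDerivAt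
  have hcomp : HasDerivAt (fun t : ℝ => u0 (t⁻¹ • x))
      (fderiv ℝ u0 (r⁻¹ • x) ((-(r ^ 2)⁻¹) • x)) r := hd.comp_hasDerivAt r hsmul
  have : HasDerivAt (fun t : ℝ => t * u0 (t⁻¹ • x))
      (1 * u0 (r⁻¹ • x) + r * fderiv ℝ u0 (r⁻¹ • x) ((-(r ^ 2)⁻¹) • x)) r :=
    (hasDerivAt_id r).mul hcomp
  convert this using 1
  have hval : ∀ v : Euc n, (fderiv ℝ u0 (r⁻¹ • x)) v = ⟪gradient u0 (r⁻¹ • x), v⟫ := by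
    intro v
    rw [gradient, InnerProductSpace.toDual_symm_apply]
  rw [(fderiv ℝ u0 (r⁻¹ • x)).map_smul, hval]
  simp only [smul_eq_mul, id_eq]
  have : r * (-(r ^ 2)⁻¹ * ⟪gradient u0 (r⁻¹ • x), x⟫)
      = -(r⁻¹ * ⟪gradient u0 (r⁻¹ • x), x⟫) := by
    field_simp
  rw [this, real_inner_smul_right]
  ring

lemma key_est {n : ℕ} (u0 : Euc n → ℝ) (hC1 : ContDiff ℝ 1 u0)
    (K δ : ℝ) (hK : 0 < K) (hδ : δ ∈ Set.Ioo (0:ℝ) 1)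
    (hstraight : ∀ x : Euc n,
        |u0 x - ⟪gradient u0 x, x⟫| ≤ K * (1 + ‖x‖) ^ (1 - δ)) :
    ∀ r1 r2 : ℝ, 0 < r1 → r1 ≤ r2 → r2 ≤ 1 → ∀ x : Euc n,
      |r2 * u0 (r2⁻¹ • x) - r1 * u0 (r1⁻¹ • x)|
        ≤ K / δ * (1 + ‖x‖) ^ (1 - δ) * (r2 ^ δ - r1 ^ δ) := by
  intro r1 r2 hr1 hr12 hr2 x
  obtain ⟨hδ0, hδ1⟩ := hδ
  have hx1 : (0:ℝ) < 1 + ‖x‖ := by positivity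
  set B : ℝ := K * (1 + ‖x‖) ^ (1 - δ) with hB
  have hBpos : 0 < B := by positivity
  set g : ℝ → ℝ := fun t => t * u0 (t⁻¹ • x) with hg
  set G' : ℝ → ℝ := fun t => u0 (t⁻¹ • x) - ⟪gradient u0 (t⁻¹ • x), t⁻¹ • x⟫ with hG'
  -- continuity of G' away from 0
  have hgradcont : Continuous (fun y : Euc n => gradient u0 y) := by
    have : Continuous (fun y : Euc n => fderiv ℝ u0 y) := hC1.continuous_fderiv one_ne_zero
    exact (InnerProductSpace.toDual ℝ (Euc n)).symm.continuous.comp this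
  have hIcc_sub : Set.uIcc r1 r2 ⊆ {t : ℝ | t ≠ 0} := by
    rw [Set.uIcc_of_le hr12]
    intro t ht
    exact (lt_of_lt_of_le hr1 ht.1).ne'
  have hsm : ContinuousOn (fun t : ℝ => t⁻¹ • x) (Set.uIcc r1 r2) := by
    apply ContinuousOn.smul (f := fun t : ℝ => t⁻¹) (g := fun _ : ℝ => x) _ continuousOn_const
    exact fun t ht => (continuousAt_inv₀ (hIcc_sub ht)).continuousWithinAt
  have hG'cont : ContinuousOn G' (Set.uIcc r1 r2) := by
    apply ContinuousOn.sub
    · exact hC1.continuous.comp_continuousOn hsm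
    · exact ContinuousOn.inner (hgradcont.comp_continuousOn hsm) hsm
  -- FTC
  have hderiv : ∀ t ∈ Set.uIcc r1 r2, HasDerivAt g (G' t) t := by
    intro t ht
    exact hasDerivAt_scaled u0 hC1 x (lt_of_lt_of_le hr1 ((Set.uIcc_of_le hr12 ▸ ht).1))
  have hint : IntervalIntegrable G' volume r1 r2 := hG'cont.intervalIntegrable
  have hftc : ∫ t in r1..r2, G' t = g r2 - g r1 :=
    intervalIntegral.integral_eq_sub_of_hasDerivAt hderiv hint
  -- pointwise bound
  have hbound : ∀ t ∈ Set.Icc r1 r2, |G' t| ≤ B * t ^ (δ - 1) := by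
    intro t ht
    have ht0 : 0 < t := lt_of_lt_of_le hr1 ht.1
    have ht1 : t ≤ 1 := le_trans ht.2 hr2
    have h1 : |G' t| ≤ K * (1 + ‖t⁻¹ • x‖) ^ (1 - δ) := hstraight (t⁻¹ • x)
    have hns : ‖t⁻¹ • x‖ = t⁻¹ * ‖x‖ := by
      rw [norm_smul, Real.norm_eq_abs, abs_of_pos (inv_pos.mpr ht0)]
    have hti : (1:ℝ) ≤ t⁻¹ := (one_le_inv₀ ht0).mpr ht1
    have h2 : 1 + ‖t⁻¹ • x‖ ≤ t⁻¹ * (1 + ‖x‖) := by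
      rw [hns, mul_add, mul_one]
      have : ‖x‖ ≥ 0 := norm_nonneg x
      nlinarith
    have h3 : (1 + ‖t⁻¹ • x‖) ^ (1 - δ) ≤ (t⁻¹ * (1 + ‖x‖)) ^ (1 - δ) :=
      Real.rpow_le_rpow (by positivity) h2 (by linarith)
    have h4 : (t⁻¹ * (1 + ‖x‖)) ^ (1 - δ) = t ^ (δ - 1) * (1 + ‖x‖) ^ (1 - δ) := by
      rw [Real.mul_rpow (by positivity) hx1.le, Real.inv_rpow ht0.le,
        ← Real.rpow_neg ht0.le, neg_sub]
    calc |G' t| ≤ K * (1 + ‖t⁻¹ • x‖) ^ (1 - δ) := h1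
      _ ≤ K * ((t⁻¹ * (1 + ‖x‖)) ^ (1 - δ)) := by nlinarith
      _ = B * t ^ (δ - 1) := by rw [h4, hB]; ring
  -- integrate the bound
  have hbint : IntervalIntegrable (fun t => B * t ^ (δ - 1)) volume r1 r2 := by
    apply ContinuousOn.intervalIntegrable
    apply ContinuousOn.mul continuousOn_const
    intro t ht
    exact (Real.continuousAt_rpow_const t (δ-1) (Or.inl (hIcc_sub ht))).continuousWithinAt
  have habs : |∫ t in r1..r2, G' t| ≤ ∫ t in r1..r2, B * t ^ (δ - 1) := by
    calc |∫ t in r1..r2, G' t| ≤ ∫ t in r1..r2, |G' t| :=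
          intervalIntegral.abs_integral_le_integral_abs hr12
      _ ≤ ∫ t in r1..r2, B * t ^ (δ - 1) := by
          apply intervalIntegral.integral_mono_on hr12 _ hbint
          · exact fun t ht => hbound t ht
          · exact (hG'cont.abs).intervalIntegrable
  have hval : ∫ t in r1..r2, B * t ^ (δ - 1) = B * ((r2 ^ δ - r1 ^ δ) / δ) := by
    rw [intervalIntegral.integral_const_mul]
    rw [integral_rpow (Or.inl (by linarith : (-1:ℝ) < δ - 1))]
    rw [sub_add_cancel]
  rw [hftc] at habs
  calc |g r2 - g r1| ≤ B * ((r2 ^ δ - r1 ^ δ) / δ) := hval ▸ habs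
    _ = K / δ * (1 + ‖x‖) ^ (1 - δ) * (r2 ^ δ - r1 ^ δ) := by rw [hB]; ring


/-- straight at infinity ⇒ blow-down cone: if `u₀ ∈ C¹` is Lipschitz and
`|u₀(x) - Du₀(x)·x| ≤ K(1+|x|)^{1-δ}`, then (i) the Cauchy-type estimate
`|r₂ u₀(x/r₂) - r₁ u₀(x/r₁)| ≤ (K/δ)(1+|x|)^{1-δ}(r₂^δ - r₁^δ)` holds for `0 < r₁ < r₂ ≤ 1`,
(ii) the blow-down `ū₀(x) = lim_{r→0⁺} r u₀(x/r)` exists locally uniformly and is Lipschitz and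
positively 1-homogeneous, and (iii) `|u₀(x) - ū₀(x)| ≤ (K/δ)(1+|x|)^{1-δ}`. -/
theorem straight_at_infinity (n : ℕ) (hn : 1 ≤ n)
    (u0 : Euc n → ℝ) (L : ℝ≥0) (hLip : LipschitzWith L u0) (hC1 : ContDiff ℝ 1 u0)
    (K δ : ℝ) (hK : 0 < K) (hδ : δ ∈ Set.Ioo (0:ℝ) 1)
    (hstraight : ∀ x : Euc n,
        |u0 x - ⟪gradient u0 x, x⟫| ≤ K * (1 + ‖x‖) ^ (1 - δ)) :
    (∀ r1 r2 : ℝ, 0 < r1 → r1 < r2 → r2 ≤ 1 → ∀ x : Euc n,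
        |r2 * u0 (r2⁻¹ • x) - r1 * u0 (r1⁻¹ • x)|
          ≤ K / δ * (1 + ‖x‖) ^ (1 - δ) * (r2 ^ δ - r1 ^ δ))
    ∧ ∃ ub0 : Euc n → ℝ,
        (∃ L' : ℝ≥0, LipschitzWith L' ub0) ∧ PosHomOne n ub0
        ∧ TendstoLocallyUniformly (fun (r : ℝ) (x : Euc n) => r * u0 (r⁻¹ • x)) ub0
            (nhdsWithin 0 (Set.Ioi 0))
        ∧ ∀ x : Euc n, |u0 x - ub0 x| ≤ K / δ * (1 + ‖x‖) ^ (1 - δ) := by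
  obtain ⟨hδ0, hδ1⟩ := hδ
  -- the estimate (i), proved with `≤`
  have est : ∀ r1 r2 : ℝ, 0 < r1 → r1 ≤ r2 → r2 ≤ 1 → ∀ x : Euc n,
      |r2 * u0 (r2⁻¹ • x) - r1 * u0 (r1⁻¹ • x)|
        ≤ K / δ * (1 + ‖x‖) ^ (1 - δ) * (r2 ^ δ - r1 ^ δ) :=
    key_est u0 hC1 K δ hK ⟨hδ0, hδ1⟩ hstraight
  set g : ℝ → Euc n → ℝ := fun r x => r * u0 (r⁻¹ • x) with hgdef
  set C : Euc n → ℝ := fun x => K / δ * (1 + ‖x‖) ^ (1 - δ) with hCdef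
  have hCpos : ∀ x, 0 < C x := fun x => by
    have : (0:ℝ) < 1 + ‖x‖ := by positivity
    positivity
  -- gap bound
  have hgap : ∀ (x : Euc n) (s t : ℝ), 0 < s → s ≤ 1 → 0 < t → t ≤ 1 →
      |g s x - g t x| ≤ C x * max s t ^ δ := by
    intro x s t hs hs1 ht ht1
    rcases le_total s t with h | h
    · rw [abs_sub_comm, max_eq_right h]
      calc |g t x - g s x| ≤ C x * (t ^ δ - s ^ δ) := est s t hs h ht1 x
        _ ≤ C x * t ^ δ := by
            have : (0:ℝ) ≤ s ^ δ := Real.rpow_nonneg hs.le δ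
            nlinarith [hCpos x]
    · rw [max_eq_left h]
      calc |g s x - g t x| ≤ C x * (s ^ δ - t ^ δ) := est t s ht h hs1 x
        _ ≤ C x * s ^ δ := by
            have : (0:ℝ) ≤ t ^ δ := Real.rpow_nonneg ht.le δ
            nlinarith [hCpos x]
  -- rpow tendsto at 0
  have hrpow0 : Tendsto (fun r : ℝ => r ^ δ) (𝓝 0) (𝓝 0) := by
    have := (Real.continuousAt_rpow_const 0 δ (Or.inr hδ0.le)).tendsto
    simpa [Real.zero_rpow hδ0.ne'] using this
  have h1div : Tendsto (fun k : ℕ => ((k : ℝ) + 1)⁻¹) atTop (𝓝 0) := by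
    simpa [one_div] using tendsto_one_div_add_atTop_nhds_zero_nat (𝕜 := ℝ)
  have hrk_pos : ∀ k : ℕ, (0:ℝ) < ((k : ℝ) + 1)⁻¹ := fun k => by positivity
  have hrk_le1 : ∀ k : ℕ, ((k : ℝ) + 1)⁻¹ ≤ 1 := fun k => by
    rw [inv_le_one_iff₀]; right; simp [Nat.cast_nonneg]
  -- Cauchy sequence and limit
  have hcauchy : ∀ x : Euc n, CauchySeq (fun k : ℕ => g ((k : ℝ) + 1)⁻¹ x) := by
    intro x
    apply cauchySeq_of_le_tendsto_0 (fun N : ℕ => C x * ((N : ℝ) + 1)⁻¹ ^ δ)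
    · intro j k N hjN hkN
      have hj : ((j : ℝ) + 1)⁻¹ ≤ ((N : ℝ) + 1)⁻¹ := by
        apply inv_anti₀ (by positivity)
        exact_mod_cast by linarith [(Nat.cast_le (α := ℝ)).mpr hjN]
      have hk : ((k : ℝ) + 1)⁻¹ ≤ ((N : ℝ) + 1)⁻¹ := by
        apply inv_anti₀ (by positivity)
        exact_mod_cast by linarith [(Nat.cast_le (α := ℝ)).mpr hkN]
      rw [Real.dist_eq]
      calc |g ((j : ℝ) + 1)⁻¹ x - g ((k : ℝ) + 1)⁻¹ x|
          ≤ C x * max ((j : ℝ) + 1)⁻¹ ((k : ℝ) + 1)⁻¹ ^ δ :=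
            hgap x _ _ (hrk_pos j) (hrk_le1 j) (hrk_pos k) (hrk_le1 k)
        _ ≤ C x * ((N : ℝ) + 1)⁻¹ ^ δ := by
            apply mul_le_mul_of_nonneg_left _ (hCpos x).le
            exact Real.rpow_le_rpow (le_max_of_le_left (hrk_pos j).le)
              (max_le hj hk) hδ0.le
    · have := (hrpow0.comp h1div).const_mul (C x)
      simpa using this
  choose ub0 htend using fun x => cauchySeq_tendsto_of_complete (hcauchy x)
  -- the key uniform estimate (★)
  have star : ∀ (x : Euc n) (r : ℝ), 0 < r → r ≤ 1 → |g r x - ub0 x| ≤ C x * r ^ δ := by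
    intro x r hr hr1
    have htd : Tendsto (fun k : ℕ => |g r x - g ((k : ℝ) + 1)⁻¹ x|) atTop
        (𝓝 |g r x - ub0 x|) := ((tendsto_const_nhds.sub (htend x)).abs)
    apply le_of_tendsto htd
    have hev : ∀ᶠ k : ℕ in atTop, ((k : ℝ) + 1)⁻¹ ≤ r := by
      filter_upwards [h1div.eventually (gt_mem_nhds hr)] with k hk using hk.le
    filter_upwards [hev] with k hk
    calc |g r x - g ((k : ℝ) + 1)⁻¹ x|
        ≤ C x * (r ^ δ - (((k : ℝ) + 1)⁻¹) ^ δ) := est _ r (hrk_pos k) hk hr1 x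
      _ ≤ C x * r ^ δ := by
          have : (0:ℝ) ≤ (((k : ℝ) + 1)⁻¹) ^ δ := Real.rpow_nonneg (hrk_pos k).le δ
          nlinarith [hCpos x]
  refine ⟨fun r1 r2 h1 h2 h3 x => est r1 r2 h1 h2.le h3 x, ub0, ⟨L, ?_⟩, ?_, ?_, ?_⟩
  · -- Lipschitz
    apply LipschitzWith.of_dist_le_mul
    intro x y
    apply le_of_tendsto_of_tendsto ((htend x).dist (htend y)) tendsto_const_nhds
    filter_upwards with k
    have hk := hrk_pos k
    set r : ℝ := ((k : ℝ) + 1)⁻¹ with hrdef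
    have e1 : g r x - g r y = r * (u0 (r⁻¹ • x) - u0 (r⁻¹ • y)) := by
      simp only [hgdef]; ring
    calc dist (g r x) (g r y)
        = |r| * |u0 (r⁻¹ • x) - u0 (r⁻¹ • y)| := by rw [Real.dist_eq, e1, abs_mul]
      _ = r * dist (u0 (r⁻¹ • x)) (u0 (r⁻¹ • y)) := by rw [abs_of_pos hk, Real.dist_eq]
      _ ≤ r * ((L : ℝ) * dist (r⁻¹ • x) (r⁻¹ • y)) :=
          mul_le_mul_of_nonneg_left (hLip.dist_le_mul _ _) hk.le
      _ = (L : ℝ) * dist x y := by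
          rw [dist_smul₀, Real.norm_eq_abs, abs_of_pos (inv_pos.mpr hk)]
          field_simp
  · -- homogeneity
    intro c hc x
    have hscale : ∀ r : ℝ, 0 < r → g r (c • x) = c * g (r / c) x := by
      intro r hr
      simp only [hgdef]
      rw [smul_smul]
      have : (r / c)⁻¹ • x = (r⁻¹ * c) • x := by
        congr 1
        field_simp
      rw [this]
      field_simp
    have habs : ∀ r : ℝ, 0 < r → r ≤ min 1 c →
        |ub0 (c • x) - c * ub0 x| ≤ (C (c • x) + c * C x * (c⁻¹) ^ δ) * r ^ δ := by
      intro r hr hrm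
      have hr1 : r ≤ 1 := le_trans hrm (min_le_left _ _)
      have hrc : r ≤ c := le_trans hrm (min_le_right _ _)
      have h1 : |g r (c • x) - ub0 (c • x)| ≤ C (c • x) * r ^ δ := star (c • x) r hr hr1
      have h2 : |g (r / c) x - ub0 x| ≤ C x * (r / c) ^ δ :=
        star x (r / c) (div_pos hr hc) ((div_le_one hc).mpr hrc)
      have hrc' : (r / c) ^ δ = r ^ δ * (c⁻¹) ^ δ := by
        rw [div_eq_mul_inv, Real.mul_rpow hr.le (inv_pos.mpr hc).le]
      calc |ub0 (c • x) - c * ub0 x|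
          ≤ |ub0 (c • x) - g r (c • x)| + |g r (c • x) - c * ub0 x| := abs_sub_le _ _ _
        _ = |g r (c • x) - ub0 (c • x)| + |c * g (r / c) x - c * ub0 x| := by
            rw [abs_sub_comm, hscale r hr]
        _ = |g r (c • x) - ub0 (c • x)| + c * |g (r / c) x - ub0 x| := by
            rw [← mul_sub, abs_mul, abs_of_pos hc]
        _ ≤ C (c • x) * r ^ δ + c * (C x * (r / c) ^ δ) := by
            have := mul_le_mul_of_nonneg_left h2 hc.le
            linarith
        _ = (C (c • x) + c * C x * (c⁻¹) ^ δ) * r ^ δ := by rw [hrc']; ring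
    have hA : |ub0 (c • x) - c * ub0 x| ≤ 0 := by
      set D := C (c • x) + c * C x * (c⁻¹) ^ δ
      have htD : Tendsto (fun r : ℝ => D * r ^ δ) (𝓝[>] (0:ℝ)) (𝓝 0) := by
        have := (hrpow0.const_mul D).mono_left (nhdsWithin_le_nhds : 𝓝[>] (0:ℝ) ≤ 𝓝 0)
        simpa using this
      apply ge_of_tendsto htD
      filter_upwards [Ioc_mem_nhdsGT_of_mem (show (0:ℝ) ∈ Ico (0:ℝ) (min 1 c) by
        simp [lt_min_iff, hc])] with r hr
      exact habs r hr.1 hr.2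
    have := abs_nonneg (ub0 (c • x) - c * ub0 x)
    have h0 : |ub0 (c • x) - c * ub0 x| = 0 := le_antisymm hA this
    linarith [abs_eq_zero.mp h0, sub_eq_zero.mp (abs_eq_zero.mp h0)]
  · -- locally uniform convergence
    rw [Metric.tendstoLocallyUniformly_iff]
    intro ε hε x
    refine ⟨ball x 1, ball_mem_nhds x one_pos, ?_⟩
    set M : ℝ := K / δ * (2 + ‖x‖) ^ (1 - δ) with hM
    have hMpos : 0 < M := by
      have : (0:ℝ) < 2 + ‖x‖ := by positivity
      positivity
    have htM : Tendsto (fun r : ℝ => M * r ^ δ) (𝓝[>] (0:ℝ)) (𝓝 0) := by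
      have := (hrpow0.const_mul M).mono_left (nhdsWithin_le_nhds : 𝓝[>] (0:ℝ) ≤ 𝓝 0)
      simpa using this
    have hev1 : ∀ᶠ r : ℝ in 𝓝[>] 0, M * r ^ δ < ε := htM.eventually (gt_mem_nhds hε)
    have hev2 : ∀ᶠ r : ℝ in 𝓝[>] 0, r ∈ Ioc (0:ℝ) 1 :=
      Ioc_mem_nhdsGT_of_mem (by simp : (0:ℝ) ∈ Ico (0:ℝ) 1)
    filter_upwards [hev1, hev2] with r h1 h2
    intro y hy
    have hCy : C y ≤ M := by
      have hyx : ‖y‖ ≤ ‖x‖ + 1 := by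
        have h := norm_sub_norm_le y x
        have : dist y x < 1 := mem_ball.mp hy
        rw [dist_eq_norm] at this
        linarith
      apply mul_le_mul_of_nonneg_left _ (by positivity : (0:ℝ) ≤ K / δ)
      exact Real.rpow_le_rpow (by positivity) (by linarith) (by linarith)
    have := star y r h2.1 h2.2
    rw [dist_comm, Real.dist_eq]
    calc |g r y - ub0 y| ≤ C y * r ^ δ := this
      _ ≤ M * r ^ δ := by
          apply mul_le_mul_of_nonneg_right hCy (Real.rpow_nonneg h2.1.le δ)
      _ < ε := h1
  · -- (iii)
    intro x
    have h1 : g 1 x = u0 x := by simp [hgdef]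
    have := star x 1 one_pos le_rfl
    rw [h1, Real.one_rpow, mul_one] at this
    exact this
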